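/- Let ξ be a Gödel numbering of a language containing a unary exponentiation function symbol exp (interpreted as n ↦ 2^n), and suppose there is a polynomial P such that ξ(A) < 2^{P(|A|)} for all expressions A (|A| the string length). Then there exists a closed term t whose value exceeds its code: ev(t) > ξ(t). Hence ξ is not regular for this language. -/

import Mathlib

/-- Closed terms of a language containing 0, S and a unary exponentiation symbol. -/
inductive ExpTm where
  | zero : ExpTm
  | succ : ExpTm → ExpTm
  | exp : ExpTm → ExpTm
deriving DecidableEq

/-- Evaluation in the standard model, with `exp` interpreted as `n ↦ 2^n`. -/
def ExpTm.eval : ExpTm → ℕ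
  | .zero => 0
  | .succ t => t.eval + 1
  | .exp t => 2 ^ t.eval

/-- String length of a term; applying `exp` adds 3 symbols (so that
`|w(n)| = 3n + 3` for `w(0) = SS0`, `w(n+1) = exp(w(n))`). -/
def ExpTm.len : ExpTm → ℕ
  | .zero => 1
  | .succ t => t.len + 1
  | .exp t => t.len + 3

/-- The tower terms: `w 0 = SS0`, `w (n+1) = exp (w n)`. -/
def wTm : ℕ → ExpTm
  | 0 => .succ (.succ .zero)
  | n + 1 => .exp (wTm n)

lemma wTm_len (n : ℕ) : (wTm n).len = 3 * n + 3 := by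
  induction n with
  | zero => rfl
  | succ n ih => simp [wTm, ExpTm.len, ih]; ring

lemma wTm_eval_succ (n : ℕ) : (wTm (n + 1)).eval = 2 ^ (wTm n).eval := rfl

lemma lin_le_pow : ∀ n, 5 ≤ n → 3 * n + 7 ≤ 2 ^ n := by
  intro n hn
  induction n with
  | zero => omega
  | succ n ih =>
    rcases Nat.lt_or_ge n 5 with h | h
    · interval_cases n <;> first | omega | norm_num
    · have := ih (by omega)
      have h32 : 32 ≤ 2 ^ n := by
        calc (32:ℕ) = 2 ^ 5 := by norm_num
        _ ≤ 2 ^ n := Nat.pow_le_pow_right (by norm_num) h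
      rw [pow_succ]; omega

lemma sq_le_pow : ∀ n, 4 ≤ n → n * n ≤ 2 ^ n := by
  intro n hn
  induction n with
  | zero => omega
  | succ n ih =>
    rcases Nat.lt_or_ge n 4 with h | h
    · interval_cases n <;> first | omega | norm_num
    · have := ih h
      have h16 : 16 ≤ 2 ^ n := by
        calc (16:ℕ) = 2 ^ 4 := by norm_num
        _ ≤ 2 ^ n := Nat.pow_le_pow_right (by norm_num) h
      rw [pow_succ]; nlinarith

lemma tower_ge (k : ℕ) : 2 ^ 2 ^ (k + 2) ≤ (wTm (k + 2)).eval := by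
  induction k with
  | zero => norm_num [wTm, ExpTm.eval]
  | succ k ih =>
    rw [wTm_eval_succ]
    apply Nat.pow_le_pow_right (by norm_num)
    calc 2 ^ (k + 3) ≤ 2 ^ 2 ^ (k + 2) := by
          apply Nat.pow_le_pow_right (by norm_num)
          have := Nat.lt_two_pow_self (n := k + 2); omega
      _ ≤ (wTm (k + 2)).eval := ih

lemma poly_bound (P : Polynomial ℕ) (m : ℕ) :
    P.eval m ≤ (∑ i ∈ Finset.range (P.natDegree + 1), P.coeff i) * (m + 1) ^ P.natDegree := by
  rw [Polynomial.eval_eq_sum_range, Finset.sum_mul]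
  apply Finset.sum_le_sum
  intro i hi
  apply Nat.mul_le_mul_left
  calc m ^ i ≤ (m + 1) ^ i := Nat.pow_le_pow_left (by omega) _
    _ ≤ (m + 1) ^ P.natDegree :=
        Nat.pow_le_pow_right (by omega) (by simpa using Nat.lt_succ_iff.mp (Finset.mem_range.mp hi))

/-- If a Gödel numbering `ξ` of a language with exponentiation satisfies
`ξ A < 2^(P(|A|))` for some polynomial `P`, then there is a closed term whose value
exceeds its code; hence `ξ` is not regular. -/
theorem exp_not_regular (ξ : ExpTm → ℕ) (hξ : Function.Injective ξ)
    (P : Polynomial ℕ) (hP : ∀ A : ExpTm, ξ A < 2 ^ P.eval A.len) :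
    ∃ t : ExpTm, ξ t < t.eval := by
  set C := ∑ i ∈ Finset.range (P.natDegree + 1), P.coeff i with hC
  set d := P.natDegree with hd
  set n := C + d + 5 with hn
  refine ⟨wTm (n + 1), ?_⟩
  have hlen : (wTm (n + 1)).len = 3 * n + 6 := by rw [wTm_len]; ring
  have key : P.eval (3 * n + 6) ≤ 2 ^ 2 ^ n := by
    calc P.eval (3 * n + 6) ≤ C * (3 * n + 7) ^ d := by
          have := poly_bound P (3 * n + 6)
          simpa [← hC, ← hd, show 3 * n + 6 + 1 = 3 * n + 7 by ring] using this
      _ ≤ 2 ^ n * (2 ^ n) ^ d := by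
          apply Nat.mul_le_mul
          · exact le_trans (Nat.le_of_lt (Nat.lt_two_pow_self (n := C)))
              (Nat.pow_le_pow_right (by norm_num) (by omega))
          · exact Nat.pow_le_pow_left (lin_le_pow n (by omega)) _
      _ = 2 ^ (n * (d + 1)) := by rw [← pow_mul, ← pow_add]; ring_nf
      _ ≤ 2 ^ (n * n) := Nat.pow_le_pow_right (by norm_num)
          (Nat.mul_le_mul_left _ (by omega))
      _ ≤ 2 ^ 2 ^ n := Nat.pow_le_pow_right (by norm_num) (sq_le_pow n (by omega))
  have htower : 2 ^ 2 ^ n ≤ (wTm n).eval := by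
    have : n = (C + d + 3) + 2 := by omega
    rw [this]; exact tower_ge (C + d + 3)
  calc ξ (wTm (n + 1)) < 2 ^ P.eval (wTm (n + 1)).len := hP _
    _ = 2 ^ P.eval (3 * n + 6) := by rw [hlen]
    _ ≤ 2 ^ (wTm n).eval :=
        Nat.pow_le_pow_right (by norm_num) (le_trans key htower)
    _ = (wTm (n + 1)).eval := (wTm_eval_succ n).symm
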